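/- Let h ≥ 2, let s, t be nonnegative integers with gcd(h, s−t) = 1, let Y₀ ⊆ ℕ be infinite with infinite gaps, X₀ = ℕ \ Y₀, and A = {s} ∪ {hx + t : x ∈ X₀}. Then A is an asymptotic nonbasis of order h for ℕ that is not a subset of any maximal asymptotic nonbasis of order h for ℕ. -/

import Mathlib

def sumsetN (h : ℕ) (A : Set ℕ) : Set ℕ :=
  {n | ∃ f : Fin h → ℕ, (∀ i, f i ∈ A) ∧ n = ∑ i, f i}

def InfiniteGapsN (Y : Set ℕ) : Prop :=
  ∀ C : ℤ, 0 < C →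
    {p : ℕ × ℕ | p.1 ∈ Y ∧ p.2 ∈ Y ∧ p.1 ≠ p.2 ∧ |(p.1 : ℤ) - p.2| ≤ C}.Finite

lemma mem_sumsetN_iff {h : ℕ} {A : Set ℕ} {n : ℕ} :
    n ∈ sumsetN h A ↔ ∃ l : List ℕ, l.length = h ∧ (∀ a ∈ l, a ∈ A) ∧ l.sum = n := by
  constructor
  · rintro ⟨f, hf, rfl⟩
    refine ⟨List.ofFn f, by simp, ?_, List.sum_ofFn⟩
    intro a ha
    rw [List.mem_ofFn] at ha
    obtain ⟨i, rfl⟩ := ha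
    exact hf i
  · rintro ⟨l, hl, hm, rfl⟩
    subst hl
    exact ⟨l.get, fun i => hm _ (l.get_mem i), by
      conv_lhs => rw [← List.ofFn_get l]
      rw [List.sum_ofFn]⟩

lemma sumsetN_mono {h : ℕ} {A B : Set ℕ} (hAB : A ⊆ B) : sumsetN h A ⊆ sumsetN h B := by
  rintro n ⟨f, hf, rfl⟩
  exact ⟨f, fun i => hAB (hf i), rfl⟩

lemma map_ht_sum (h t : ℕ) : ∀ xs : List ℕ, (xs.map (fun x => h*x+t)).sum = h * xs.sum + xs.length * t := by
  intro xs
  induction xs with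
  | nil => simp
  | cons x xs ih => simp [ih]; ring

lemma gaps_K {Y : Set ℕ} (hY : InfiniteGapsN Y) :
    ∃ K : ℕ, ∀ a b : ℕ, K ≤ a → a < b → b ≤ a + 2 → a ∈ Y → b ∈ Y → False := by
  have hfin := hY 2 (by norm_num)
  have h1 : (Prod.fst '' {p : ℕ × ℕ | p.1 ∈ Y ∧ p.2 ∈ Y ∧ p.1 ≠ p.2 ∧ |(p.1 : ℤ) - p.2| ≤ 2}).Finite :=
    hfin.image _
  obtain ⟨K, hK⟩ := h1.bddAbove
  refine ⟨K + 1, fun a b ha hab hb2 haY hbY => ?_⟩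
  have : a ∈ Prod.fst '' {p : ℕ × ℕ | p.1 ∈ Y ∧ p.2 ∈ Y ∧ p.1 ≠ p.2 ∧ |(p.1 : ℤ) - p.2| ≤ 2} := by
    refine ⟨(a, b), ⟨haY, hbY, by omega, ?_⟩, rfl⟩
    rw [abs_le]; constructor <;> [skip; skip] <;> push_cast <;> omega
  have := hK this
  omega

lemma two_sum {Y X : Set ℕ} (hX : X = Yᶜ) {K : ℕ}
    (hK : ∀ a b : ℕ, K ≤ a → a < b → b ≤ a + 2 → a ∈ Y → b ∈ Y → False) :
    ∀ n, 2*K+2 ≤ n → ∃ x₁ x₂, x₁ ∈ X ∧ x₂ ∈ X ∧ x₁ + x₂ = n := by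
  intro n hn
  have W : ∀ a, a ∉ Y → a ∈ X := fun a ha => by rw [hX]; exact ha
  by_cases h0 : K ∈ Y <;> by_cases h1 : K+1 ∈ Y <;> by_cases h2 : K+2 ∈ Y <;>
    by_cases g0 : n - K ∈ Y <;> by_cases g1 : n - (K+1) ∈ Y <;> by_cases g2 : n - (K+2) ∈ Y <;>
    first
    | exact absurd h1 (fun h1 => hK K (K+1) (by omega) (by omega) (by omega) h0 h1)
    | exact absurd h2 (fun h2 => hK K (K+2) (by omega) (by omega) (by omega) h0 h2)
    | exact absurd h2 (fun h2 => hK (K+1) (K+2) (by omega) (by omega) (by omega) h1 h2)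
    | exact absurd g0 (fun g0 => hK (n-(K+1)) (n-K) (by omega) (by omega) (by omega) g1 g0)
    | exact absurd g0 (fun g0 => hK (n-(K+2)) (n-K) (by omega) (by omega) (by omega) g2 g0)
    | exact absurd g1 (fun g1 => hK (n-(K+2)) (n-(K+1)) (by omega) (by omega) (by omega) g2 g1)
    | exact ⟨K, n - K, W _ h0, W _ g0, by omega⟩
    | exact ⟨K+1, n - (K+1), W _ h1, W _ g1, by omega⟩
    | exact ⟨K+2, n - (K+2), W _ h2, W _ g2, by omega⟩

lemma kfold_sum {Y X : Set ℕ} (hX : X = Yᶜ) {K : ℕ}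
    (hK : ∀ a b : ℕ, K ≤ a → a < b → b ≤ a + 2 → a ∈ Y → b ∈ Y → False)
    {x₀ : ℕ} (hx₀ : x₀ ∈ X) (h : ℕ) :
    ∀ k, 2 ≤ k → k ≤ h → ∀ q, 2*K+2 + h*x₀ ≤ q →
      ∃ xs : List ℕ, xs.length = k ∧ (∀ x ∈ xs, x ∈ X) ∧ xs.sum = q := by
  intro k hk2 hkh q hq
  have hle : (k-2) * x₀ ≤ h * x₀ := Nat.mul_le_mul_right x₀ (by omega)
  obtain ⟨x₁, x₂, hx₁, hx₂, hsum⟩ := two_sum hX hK (q - (k-2)*x₀) (by omega)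
  refine ⟨x₁ :: x₂ :: List.replicate (k-2) x₀, by simp; omega, ?_, ?_⟩
  · intro x hx
    simp [List.mem_replicate] at hx
    rcases hx with rfl | rfl | ⟨_, rfl⟩ <;> assumption
  · simp [List.sum_replicate, smul_eq_mul]
    omega

lemma count_split (b : ℕ) : ∀ l : List ℕ,
    l.sum = (l.count b) * b + (l.filter (fun a => a ≠ b)).sum ∧
    l.length = (l.count b) + (l.filter (fun a => a ≠ b)).length := by
  intro l
  induction l with
  | nil => simp
  | cons a l ih =>
    by_cases ha : a = b
    · subst ha
      rw [List.sum_cons, List.length_cons, List.count_cons_self,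
          List.filter_cons_of_neg (by simp)]
      exact ⟨by rw [ih.1]; ring, by rw [ih.2]; ring⟩
    · rw [List.sum_cons, List.length_cons, List.count_cons_of_ne ha,
          List.filter_cons_of_pos (by simp [ha]), List.sum_cons, List.length_cons]
      exact ⟨by rw [ih.1]; ring, by rw [ih.2]; ring⟩

lemma T_split {X : Set ℕ} (h t : ℕ) : ∀ l : List ℕ,
    (∀ a ∈ l, ∃ x ∈ X, a = h * x + t) →
    ∃ xs : List ℕ, xs.length = l.length ∧ (∀ x ∈ xs, x ∈ X) ∧ l.sum = h * xs.sum + l.length * t := by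
  intro l
  induction l with
  | nil => exact fun _ => ⟨[], by simp, by simp, by simp⟩
  | cons a l ih =>
    intro hl
    obtain ⟨x, hxX, rfl⟩ := hl a (by simp)
    obtain ⟨xs, hlen, hmem, hsum⟩ := ih (fun a ha => hl a (by simp [ha]))
    refine ⟨x :: xs, by simp [hlen], ?_, ?_⟩
    · intro y hy; rcases List.mem_cons.1 hy with rfl | hy; exacts [hxX, hmem y hy]
    · simp [hsum]; ring

lemma not_mem_sumsetA {h : ℕ} (hh : 2 ≤ h) {s t : ℕ}
    (hgcd : Int.gcd (h : ℤ) ((s : ℤ) - t) = 1)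
    {Y₀ X₀ A : Set ℕ} (hX : X₀ = Y₀ᶜ)
    (hA : A = {s} ∪ {m : ℕ | ∃ x ∈ X₀, m = h * x + t})
    {y : ℕ} (hy : y ∈ Y₀) : (h-1)*s + t + h*y ∉ sumsetN h A := by
  intro hmem
  rw [mem_sumsetN_iff] at hmem
  obtain ⟨l, hl, hmA, hsum⟩ := hmem
  obtain ⟨hs1, hs2⟩ := count_split s l
  set j := l.count s with hj
  set l' := l.filter (fun a => a ≠ s) with hl'
  have hmT : ∀ a ∈ l', ∃ x ∈ X₀, a = h * x + t := by
    intro a ha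
    rw [hl', List.mem_filter] at ha
    have := hmA a ha.1
    rw [hA] at this
    rcases this with h1 | h2
    · exact absurd h1 (by simpa using ha.2)
    · exact h2
  obtain ⟨xs, hxlen, hxmem, hxsum⟩ := T_split h t l' hmT
  set L := l'.length with hL
  set σ := xs.sum with hσ
  -- j*s + (h*σ + L*t) = (h-1)*s + t + h*y,  j + L = h
  have E : (j:ℤ)*s + (h*σ + L*t) = ((h:ℤ)-1)*s + t + h*y := by
    have : (j*s + (h*σ + L*t) : ℕ) = ((h-1)*s + t + h*y : ℕ) := by
      rw [← hxsum, ← hs1, hsum]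
    have := congrArg (Nat.cast : ℕ → ℤ) this
    push_cast at this
    rw [Nat.cast_sub (by omega : 1 ≤ h)] at this <;> push_cast at this ⊢ <;> linarith
  have hLz : (j:ℤ) + L = h := by
    have : j + L = h := by omega
    exact_mod_cast this
  have key : ((j:ℤ) - ((h:ℤ)-1)) * ((s:ℤ)-t) = h * ((y:ℤ) - σ) := by
    linear_combination E - (t:ℤ) * hLz
  have hdvd : (h:ℤ) ∣ ((j:ℤ) - ((h:ℤ)-1)) := by
    have hco : IsCoprime (h:ℤ) ((s:ℤ)-t) := Int.isCoprime_iff_gcd_eq_one.mpr hgcd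
    exact hco.dvd_of_dvd_mul_right ⟨_, key⟩
  have hj0 : (j:ℤ) - ((h:ℤ)-1) = 0 := by
    refine Int.eq_zero_of_abs_lt_dvd hdvd ?_
    have hjh : j ≤ h := by omega
    rw [abs_lt]
    constructor <;> push_cast <;> omega
  have hyσ : y = σ := by
    have : (h:ℤ) * ((y:ℤ) - σ) = 0 := by linear_combination -key + ((s:ℤ)-t) * hj0
    have h0 : ((y:ℤ) - σ) = 0 := by
      rcases mul_eq_zero.1 this with hc | hc
      · exfalso; have : (h:ℤ) ≠ 0 := by positivity
        omega
      · exact hc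
    omega
  have hL1 : L = 1 := by
    have h1 : (j:ℤ) + 1 = (h:ℤ) := by omega
    have hj' : j + 1 = h := by exact_mod_cast h1
    omega
  obtain ⟨x, hx⟩ := List.length_eq_one_iff.1 (hxlen.trans hL1)
  have hxX : x ∈ X₀ := hxmem x (by simp [hx])
  have : σ = x := by rw [hσ, hx]; simp
  rw [hX] at hxX
  exact hxX (by rwa [← this, ← hyσ])

lemma coverage {h : ℕ} (hh : 2 ≤ h) {s t : ℕ}
    (hgcd : Int.gcd (h : ℤ) ((s : ℤ) - t) = 1)
    {Y₀ X₀ A : Set ℕ} (hX : X₀ = Y₀ᶜ)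
    (hA : A = {s} ∪ {m : ℕ | ∃ x ∈ X₀, m = h * x + t})
    {K : ℕ} (hK : ∀ a b : ℕ, K ≤ a → a < b → b ≤ a + 2 → a ∈ Y₀ → b ∈ Y₀ → False)
    {x₀ : ℕ} (hx₀ : x₀ ∈ X₀) :
    ∀ n, h*(s+t+(2*K+2+h*x₀)+1) ≤ n → (¬ ∃ y ∈ Y₀, n = (h-1)*s + t + h*y) →
      n ∈ sumsetN h A := by
  intro n hn hny
  set B := 2*K+2+h*x₀ with hB
  obtain ⟨a, b, hab⟩ := Int.isCoprime_iff_gcd_eq_one.mpr hgcd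
  set j : ℕ := (((n:ℤ) * b) % h).toNat with hjdef
  have hpos : (0:ℤ) < h := by positivity
  have hj_eq : (j:ℤ) = ((n:ℤ) * b) % h := by
    rw [hjdef]; exact Int.toNat_of_nonneg (Int.emod_nonneg _ (by omega))
  have hj_lt : j < h := by
    have := Int.emod_lt_of_pos ((n:ℤ) * b) hpos
    omega
  obtain ⟨c, hc⟩ : (h:ℤ) ∣ ((n:ℤ)*b - j) :=
    ⟨((n:ℤ)*b)/h, by rw [hj_eq, Int.emod_def]; ring⟩
  obtain ⟨c₂, hc₂⟩ : (h:ℤ) ∣ ((n:ℤ) - j*((s:ℤ)-t)) :=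
    ⟨(n:ℤ)*a + c*((s:ℤ)-t), by linear_combination (-(n:ℤ))*hab + ((s:ℤ)-(t:ℤ))*hc⟩
  have e : (n:ℤ) = j*s + ((h:ℤ)-(j:ℤ))*t + h*(c₂ - t) := by linear_combination hc₂
  -- q := c₂ - t is large
  have hqB : (B:ℤ) + 1 ≤ c₂ - t := by
    have h1 : (h:ℤ)*(c₂ - t) = (n:ℤ) - (j:ℤ)*s - ((h:ℤ)-(j:ℤ))*t := by linarith [e]
    have h2 : (j:ℤ)*s ≤ (h:ℤ)*s := by
      have : (j:ℤ) ≤ h := by omega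
      nlinarith [Int.ofNat_nonneg s]
    have h3 : ((h:ℤ)-(j:ℤ))*t ≤ (h:ℤ)*t := by
      have : (0:ℤ) ≤ j := by positivity
      nlinarith [Int.ofNat_nonneg t]
    have h4 : (h:ℤ)*((B:ℤ)+1) ≤ (h:ℤ)*(c₂-t) := by
      have hn' : (h:ℤ)*(s+t+(B:ℤ)+1) ≤ n := by exact_mod_cast hn
      nlinarith
    nlinarith
  set q : ℕ := (c₂ - t).toNat with hq
  have hqz : (q:ℤ) = c₂ - t := Int.toNat_of_nonneg (by omega)
  have eqn : n = j*s + (h-j)*t + h*q := by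
    have : (n:ℤ) = (j:ℤ)*s + ((h:ℤ)-(j:ℤ))*t + (h:ℤ)*q := by rw [hqz]; exact e
    have h5 : ((h - j : ℕ):ℤ) = (h:ℤ)-(j:ℤ) := by
      push_cast [Nat.cast_sub (le_of_lt hj_lt)]; ring
    rw [← h5] at this
    exact_mod_cast this
  have hqB' : B + 1 ≤ q := by omega
  rw [mem_sumsetN_iff]
  by_cases hcase : j + 1 = h
  · -- j = h - 1
    have hq_not : q ∉ Y₀ := by
      intro hqY
      exact hny ⟨q, hqY, by
        have : h - j = 1 := by omega
        have h6 : h - 1 = j := by omega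
        rw [this, ← h6] at eqn
        linarith [eqn]⟩
    have hqX : q ∈ X₀ := by rw [hX]; exact hq_not
    refine ⟨List.replicate j s ++ [h*q + t], by simp; omega, ?_, ?_⟩
    · intro a' ha'
      rcases List.mem_append.1 ha' with ha' | ha'
      · rw [List.eq_of_mem_replicate ha', hA]; left; rfl
      · rw [List.mem_singleton.1 ha', hA]; right; exact ⟨q, hqX, rfl⟩
    · rw [List.sum_append, List.sum_replicate, smul_eq_mul, List.sum_singleton]
      have h7 : h - j = 1 := by omega
      rw [h7] at eqn
      linarith [eqn]
  · -- j ≤ h - 2, k := h - j ≥ 2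
    obtain ⟨xs, hxlen, hxmem, hxsum⟩ :=
      kfold_sum hX hK hx₀ h (h-j) (by omega) (by omega) q (by omega)
    refine ⟨List.replicate j s ++ xs.map (fun x => h*x+t), ?_, ?_, ?_⟩
    · simp [hxlen]; omega
    · intro a' ha'
      rcases List.mem_append.1 ha' with ha' | ha'
      · rw [List.eq_of_mem_replicate ha', hA]; left; rfl
      · obtain ⟨x, hx, rfl⟩ := List.mem_map.1 ha'
        rw [hA]; right; exact ⟨x, hxmem x hx, rfl⟩
    · rw [List.sum_append, List.sum_replicate, smul_eq_mul, map_ht_sum, hxlen, hxsum]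
      linarith [eqn]

theorem stmt18 (h : ℕ) (hh : 2 ≤ h) (s t : ℕ)
    (hgcd : Int.gcd (h : ℤ) ((s : ℤ) - t) = 1)
    (Y₀ : Set ℕ) (hYinf : Y₀.Infinite) (hYgaps : InfiniteGapsN Y₀)
    (X₀ : Set ℕ) (hX : X₀ = Y₀ᶜ)
    (A : Set ℕ) (hA : A = {s} ∪ {m : ℕ | ∃ x ∈ X₀, m = h * x + t}) :
    (sumsetN h A)ᶜ.Infinite ∧
    ¬ ∃ M : Set ℕ, A ⊆ M ∧ (sumsetN h M)ᶜ.Infinite ∧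
        ∀ b ∉ M, (sumsetN h (M ∪ {b}))ᶜ.Finite := by
  obtain ⟨K, hK⟩ := gaps_K hYgaps
  obtain ⟨x₀, x₁', hx₀, hx₁', hsum01⟩ := two_sum hX hK (2*K+2) le_rfl
  set w : ℕ → ℕ := fun y => (h-1)*s + t + h*y with hw
  have hwinj : Function.Injective w := by
    intro y1 y2 e
    simp only [hw] at e
    have : h*y1 = h*y2 := by omega
    exact Nat.eq_of_mul_eq_mul_left (by omega) this
  constructor
  · have hsub : w '' Y₀ ⊆ (sumsetN h A)ᶜ := by
      rintro _ ⟨y, hy, rfl⟩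
      exact not_mem_sumsetA hh hgcd hX hA hy
    exact (hYinf.image (hwinj.injOn)).mono hsub
  · rintro ⟨M, hAM, hWinf, hmax⟩
    set N := h*(s+t+(2*K+2+h*x₀)+1) with hN
    have hAsubM : sumsetN h A ⊆ sumsetN h M := sumsetN_mono hAM
    set Y₁ := {y | y ∈ Y₀ ∧ w y ∉ sumsetN h M} with hY₁
    have hY₁inf : Y₁.Infinite := by
      by_contra hfin
      rw [Set.not_infinite] at hfin
      have himg : (w '' Y₁).Finite := hfin.image _
      have hsub : ((sumsetN h M)ᶜ \ Set.Iio N) ⊆ w '' Y₁ := by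
        rintro n ⟨hnc, hnN⟩
        rw [Set.mem_Iio, not_lt] at hnN
        have hnA : n ∉ sumsetN h A := fun hmem => hnc (hAsubM hmem)
        by_cases hex : ∃ y ∈ Y₀, n = (h-1)*s + t + h*y
        · obtain ⟨y, hy, rfl⟩ := hex
          exact ⟨y, ⟨hy, hnc⟩, rfl⟩
        · exact absurd (coverage hh hgcd hX hA hK hx₀ n hnN hex) hnA
      exact (hWinf.diff (Set.finite_Iio N)) (himg.subset hsub)
    obtain ⟨ys, hys⟩ := hY₁inf.nonempty
    set b := h*ys + t with hb
    have hsY : s ∈ M := hAM (by rw [hA]; left; rfl)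
    have hbM : b ∉ M := by
      intro hbM
      apply hys.2
      refine mem_sumsetN_iff.mpr ⟨List.replicate (h-1) s ++ [b], by simp; omega, ?_, ?_⟩
      · intro a ha
        rcases List.mem_append.1 ha with ha | ha
        · rw [List.eq_of_mem_replicate ha]; exact hsY
        · rw [List.mem_singleton.1 ha]; exact hbM
      · rw [List.sum_append, List.sum_replicate, smul_eq_mul, List.sum_singleton, hb, hw]
        linarith
    have hfin := hmax b hbM
    have core : ∀ y ∈ Y₁, y ≠ ys → w y ∉ sumsetN h (M ∪ {b}) := by
      intro y hy hne hmem
      rw [mem_sumsetN_iff] at hmem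
      obtain ⟨l, hl, hmem', hsum⟩ := hmem
      obtain ⟨hs1, hs2⟩ := count_split b l
      set k := l.count b with hkdef
      set l' := l.filter (fun a => a ≠ b) with hl'def
      have hl'M : ∀ a ∈ l', a ∈ M := by
        intro a ha
        rw [hl'def, List.mem_filter] at ha
        rcases hmem' a ha.1 with h1 | h1
        · exact h1
        · exact absurd (Set.mem_singleton_iff.1 h1) (by simpa using ha.2)
      have hk0 : k ≠ 0 := by
        intro hk
        apply hy.2
        exact mem_sumsetN_iff.mpr ⟨l', by omega, hl'M, by
          rw [← hsum, hs1, hk, Nat.zero_mul, Nat.zero_add]⟩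
      rcases Nat.lt_or_ge k 2 with hk1 | hk2
      · -- k = 1
        have hk : k = 1 := by omega
        have hE1 : b + l'.sum = w y := by rw [← hsum, hs1, hk]; ring
        have claim : ∀ y', y' ∈ Y₁ → y ≤ y' → (y' + ys - y) ∈ Y₀ := by
          intro y' hy' hyy'
          by_contra hxY
          have hxX : (y' + ys - y) ∈ X₀ := by rw [hX]; exact hxY
          apply hy'.2
          refine mem_sumsetN_iff.mpr ⟨(h*(y' + ys - y) + t) :: l', by simp; omega, ?_, ?_⟩
          · intro a ha
            rcases List.mem_cons.1 ha with rfl | ha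
            · exact hAM (by rw [hA]; right; exact ⟨_, hxX, rfl⟩)
            · exact hl'M a ha
          · rw [List.sum_cons]
            have hx_eq : (y' + ys - y) + y = y' + ys := by omega
            have h8 : h*(y' + ys - y) + h*y = h*y' + h*ys := by
              rw [← Nat.left_distrib, ← Nat.left_distrib, hx_eq]
            simp only [hw, hb] at hE1 ⊢
            linarith
        -- gaps contradiction
        have hCpos : (0:ℤ) < (ys:ℤ) + y + 1 := by positivity
        have hfinP := hYgaps ((ys:ℤ) + y + 1) hCpos
        have hsub2 : {y' | y' ∈ Y₁ ∧ y ≤ y'} ⊆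
            Prod.snd '' {p : ℕ × ℕ | p.1 ∈ Y₀ ∧ p.2 ∈ Y₀ ∧ p.1 ≠ p.2 ∧
              |(p.1 : ℤ) - p.2| ≤ (ys:ℤ) + y + 1} := by
          rintro y' ⟨hy', hyy'⟩
          refine ⟨(y' + ys - y, y'), ⟨claim y' hy' hyy', hy'.1, by omega, ?_⟩, rfl⟩
          have hc : ((y' + ys - y : ℕ) : ℤ) = (y':ℤ) + ys - y := by
            push_cast [Nat.cast_sub (by omega : y ≤ y' + ys)]; ring
          rw [hc, abs_le]
          constructor <;> omega
        have hinf2 : {y' | y' ∈ Y₁ ∧ y ≤ y'}.Infinite := by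
          refine (hY₁inf.diff (Set.finite_Iio y)).mono ?_
          rintro z ⟨hz, hz2⟩
          exact ⟨hz, by simpa [not_lt] using hz2⟩
        exact hinf2 ((hfinP.image Prod.snd).subset hsub2)
      · -- k ≥ 2
        have hkh : k ≤ h := by omega
        obtain ⟨y', hy', hyy'⟩ := hY₁inf.exists_gt (y + (2*K+2+h*x₀))
        have hE1 : k*b + l'.sum = w y := by rw [← hsum, hs1]
        obtain ⟨N', hN', hN'b⟩ : ∃ N', N' + y = y' + k*ys ∧ 2*K+2+h*x₀ ≤ N' := by
          refine ⟨y' + k*ys - y, ?_, ?_⟩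
          · have h1 : y ≤ y' := by generalize h*x₀ = Z at hyy'; omega
            generalize k*ys = W
            omega
          · generalize h*x₀ = Z at hyy' ⊢
            generalize k*ys = W
            omega
        obtain ⟨xs, hxlen, hxmem, hxsum⟩ :=
          kfold_sum hX hK hx₀ h k hk2 hkh N' hN'b
        apply hy'.2
        refine mem_sumsetN_iff.mpr ⟨xs.map (fun x => h*x+t) ++ l', by simp [hxlen]; omega, ?_, ?_⟩
        · intro a ha
          rcases List.mem_append.1 ha with ha | ha
          · obtain ⟨x, hxx, rfl⟩ := List.mem_map.1 ha
            exact hAM (by rw [hA]; right; exact ⟨x, hxmem x hxx, rfl⟩)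
          · exact hl'M a ha
        · rw [List.sum_append, map_ht_sum, hxlen, hxsum]
          have h9 : k*b = h*(k*ys) + k*t := by rw [hb]; ring
          have h10 : h*N' + h*y = h*y' + h*(k*ys) := by
            rw [← Nat.left_distrib, ← Nat.left_distrib, hN']
          simp only [hw] at hE1 ⊢
          linarith
    have hsubG : w '' (Y₁ \ {ys}) ⊆ (sumsetN h (M ∪ {b}))ᶜ := by
      rintro _ ⟨y, ⟨hy1, hy2⟩, rfl⟩
      exact core y hy1 (by simpa using hy2)
    exact ((hY₁inf.diff (Set.finite_singleton ys)).image hwinj.injOn) (hfin.subset hsubG)
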